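/- For every positive integer n, the matrix ring Mₙ(𝔽₂) over the field with two elements is nil-clean. -/

import Mathlib

/-- An element of a ring is nil-clean if it is the sum of an idempotent and a nilpotent. -/
def IsNilCleanRing (R : Type*) [Ring R] : Prop :=
  ∀ a : R, ∃ e n : R, IsIdempotentElem e ∧ IsNilpotent n ∧ a = e + n

open Module Submodule Finset

section Char2

variable {V : Type*} [AddCommGroup V] [Module (ZMod 2) V]

private lemma char2_add_self (x : V) : x + x = 0 := by
  have h : x + x = ((1 : ZMod 2) + 1) • x := by rw [add_smul, one_smul]
  rw [h, show (1 : ZMod 2) + 1 = 0 by decide, zero_smul]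

private lemma char2_sub (x y : V) : x - y = x + y := by
  rw [sub_eq_add_neg, neg_eq_of_add_eq_zero_left (char2_add_self y)]

end Char2

section Cyclic

variable {V : Type*} [AddCommGroup V] [Module (ZMod 2) V]

lemma cyclic_nilclean (g : Module.End (ZMod 2) V) (v : V) (m : ℕ) (hm : 0 < m)
    (hind : LinearIndependent (ZMod 2) (fun i : Fin m => (g ^ (i : ℕ)) v))
    (hspan : ⊤ ≤ Submodule.span (ZMod 2) (Set.range (fun i : Fin m => (g ^ (i : ℕ)) v))) :
    ∃ e : Module.End (ZMod 2) V, IsIdempotentElem e ∧ IsNilpotent (g - e) := by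
  classical
  set β : ℕ → V := fun i => (g ^ i) v with hβdef
  have hgβ : ∀ i, g (β i) = β (i + 1) := by
    intro i
    show g ((g ^ i) v) = (g ^ (i + 1)) v
    rw [pow_succ', Module.End.mul_apply]
  let B : Basis (Fin m) (ZMod 2) V := Basis.mk hind hspan
  have hB : ∀ i : Fin m, B i = β (i : ℕ) := fun i => Basis.mk_apply hind hspan i
  set a : Fin m →₀ ZMod 2 := B.repr (β m) with hadef
  set α : ℕ → ZMod 2 := fun i => if h : i < m then a ⟨i, h⟩ else 0 with hαdef
  have hrepr : β m = ∑ i ∈ Finset.range m, α i • β i := by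
    conv_lhs => rw [← B.sum_repr (β m)]
    rw [← Fin.sum_univ_eq_sum_range (fun i => α i • β i) m]
    refine Finset.sum_congr rfl fun i _ => ?_
    rw [hB]
    congr 1
    simp [hαdef, i.isLt, hadef]
  by_cases ha : a = 0
  · -- g^m v = 0 : g itself is nilpotent
    have hβm : β m = 0 := by
      rw [hrepr]
      refine Finset.sum_eq_zero fun i _ => ?_
      simp [hαdef, ha]
    refine ⟨0, by simp [IsIdempotentElem], ⟨m + m, ?_⟩⟩
    rw [sub_zero]
    refine B.ext fun i => ?_
    rw [hB]
    have h1 : (g ^ (m + m)) (β (i : ℕ)) = (g ^ (m + (i : ℕ) + m)) v := by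
      show (g ^ (m + m)) ((g ^ (i : ℕ)) v) = _
      rw [← Module.End.mul_apply, ← pow_add]
      congr 2
      omega
    have h2 : (g ^ (m + (i : ℕ) + m)) v = 0 := by
      rw [pow_add, Module.End.mul_apply]
      show (g ^ (m + (i : ℕ))) (β m) = 0
      rw [hβm, map_zero]
    simp [h1, h2]
  · -- main case
    have h01 : ∀ x : ZMod 2, x ≠ 0 → x = 1 := by decide
    have hxx : ∀ x : ZMod 2, x + x = 0 := by decide
    have hsupp : a.support.Nonempty := Finsupp.support_nonempty_iff.mpr ha
    set K : Fin m := a.support.max' hsupp with hKdef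
    have haK : a K = 1 := h01 _ (Finsupp.mem_support_iff.mp (a.support.max'_mem hsupp))
    have hagt : ∀ i : Fin m, K < i → a i = 0 := by
      intro i hi
      by_contra hne
      exact absurd (Finset.le_max' _ i (Finsupp.mem_support_iff.mpr hne)) (not_le.mpr hi)
    have hKm : (K : ℕ) < m := K.isLt
    set σ : ℕ → ZMod 2 := fun i => if i < (K : ℕ) then α i else if i = (K : ℕ) then 0 else 1
      with hσdef
    set u : V := ∑ i ∈ Finset.range m, σ i • β i with hudef
    set t : V := ∑ i ∈ Finset.Ico (K : ℕ) m, β i with htdef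
    set col : Fin m → V :=
      fun j => (if (j : ℕ) = (K : ℕ) then β (K : ℕ) else 0) + (if (j : ℕ) = m - 1 then u else 0)
      with hcoldef
    set e : Module.End (ZMod 2) V := B.constr (ZMod 2) col with hedef
    have heN : ∀ i, i < m → e (β i) =
        (if i = (K : ℕ) then β (K : ℕ) else 0) + (if i = m - 1 then u else 0) := by
      intro i hi
      have h := B.constr_basis (ZMod 2) col ⟨i, hi⟩
      rw [hB] at h
      exact h
    -- coefficient identity
    have hcoeff : ∀ i ∈ Finset.range m, (α i + σ i) • β i =
        (if (K : ℕ) ≤ i then β i else 0) := by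
      intro i hi
      rw [Finset.mem_range] at hi
      rcases lt_trichotomy i (K : ℕ) with h | h | h
      · rw [if_neg (not_le.mpr h)]
        have : σ i = α i := by simp [hσdef, h]
        rw [this, hxx, zero_smul]
      · have hα : α i = 1 := by
          subst h
          simp [hαdef, hKm, haK]
        have hσ : σ i = 0 := by simp [hσdef, h]
        rw [hα, hσ, if_pos (le_of_eq h.symm), add_zero, one_smul]
      · have hα : α i = 0 := by
          have := hagt ⟨i, hi⟩ (by simpa [Fin.lt_def] using h)
          simp [hαdef, hi, this]
        have hσ : σ i = 1 := by simp [hσdef, not_lt.mpr (le_of_lt h), Nat.ne_of_gt h]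
        rw [hα, hσ, if_pos (le_of_lt h), zero_add, one_smul]
    have hfilter : Finset.filter (fun i => (K : ℕ) ≤ i) (Finset.range m)
        = Finset.Ico (K : ℕ) m := by
      ext i
      simp [Finset.mem_filter, Finset.mem_range, Finset.mem_Ico, and_comm]
    have hmu : β m + u = t := by
      rw [hrepr, hudef, ← Finset.sum_add_distrib]
      have h1 : ∀ i ∈ Finset.range m, α i • β i + σ i • β i
          = (if (K : ℕ) ≤ i then β i else 0) := by
        intro i hi
        rw [← add_smul]
        exact hcoeff i hi
      rw [Finset.sum_congr rfl h1, ← Finset.sum_filter, hfilter]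
    -- collapsing e on sums
    have hcollapse : ∀ (s : Finset ℕ) (c : ℕ → ZMod 2), (∀ i ∈ s, i < m) →
        e (∑ i ∈ s, c i • β i) =
          (if (K : ℕ) ∈ s then c (K : ℕ) • β (K : ℕ) else 0)
          + (if m - 1 ∈ s then c (m - 1) • u else 0) := by
      intro s c hs
      rw [map_sum]
      have h1 : ∀ i ∈ s, e (c i • β i) =
          (if i = (K : ℕ) then c i • β (K : ℕ) else 0) + (if i = m - 1 then c i • u else 0) := by
        intro i hi
        rw [map_smul, heN i (hs i hi), smul_add]
        congr 1
        · split <;> simp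
        · split <;> simp
      rw [Finset.sum_congr rfl h1, Finset.sum_add_distrib,
        Finset.sum_ite_eq' s ((K : ℕ)) (fun i => c i • β (K : ℕ)),
        Finset.sum_ite_eq' s (m - 1) (fun i => c i • u)]
    have hm1m : m - 1 < m := by omega
    have heu : e u = σ (m - 1) • u := by
      rw [hudef, hcollapse (Finset.range m) σ (fun i hi => Finset.mem_range.mp hi)]
      have hσK : σ (K : ℕ) = 0 := by simp [hσdef]
      rw [if_pos (Finset.mem_range.mpr hKm), if_pos (Finset.mem_range.mpr hm1m), hσK,
        zero_smul, zero_add]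
    have het : e t = β (K : ℕ) + u := by
      have h0 : t = ∑ i ∈ Finset.Ico (K : ℕ) m, (1 : ZMod 2) • β i := by simp [htdef]
      rw [h0, hcollapse (Finset.Ico (K : ℕ) m) (fun _ => 1)
        (fun i hi => (Finset.mem_Ico.mp hi).2)]
      rw [if_pos (Finset.mem_Ico.mpr ⟨le_refl _, hKm⟩),
        if_pos (Finset.mem_Ico.mpr ⟨by omega, hm1m⟩), one_smul, one_smul]
    -- idempotency
    have hσm1 : (K : ℕ) ≠ m - 1 → σ (m - 1) = 1 := by
      intro h
      have h2 : ¬ (m - 1 < (K : ℕ)) := by omega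
      simp [hσdef, h2, Ne.symm h]
    have hidem : IsIdempotentElem e := by
      refine B.ext fun j => ?_
      rw [Module.End.mul_apply, hB, heN (j : ℕ) j.isLt]
      by_cases hjK : (j : ℕ) = (K : ℕ)
      · by_cases hKL : (K : ℕ) = m - 1
        · rw [if_pos hjK, if_pos (by omega), map_add, heN (K : ℕ) hKm, if_pos rfl,
            if_pos hKL, heu]
          have : σ (m - 1) = 0 := by
            have h2 : ¬ (m - 1 < (K : ℕ)) := by omega
            simp [hσdef, h2, hKL.symm]
          rw [this, zero_smul, add_zero]
        · rw [if_pos hjK, if_neg (by omega : ¬ (j : ℕ) = m - 1), add_zero,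
            heN (K : ℕ) hKm, if_pos rfl, if_neg hKL, add_zero]
      · by_cases hjL : (j : ℕ) = m - 1
        · rw [if_neg hjK, if_pos hjL, zero_add, heu, hσm1 (by omega), one_smul]
        · rw [if_neg hjK, if_neg hjL, add_zero, map_zero]
    -- the nilpotent part
    set n : Module.End (ZMod 2) V := g - e with hndef
    have hng : ∀ x, n x = g x + e x := fun x => by
      rw [hndef, LinearMap.sub_apply, char2_sub]
    have hn1 : ∀ i, i + 1 < m → i ≠ (K : ℕ) → n (β i) = β (i + 1) := by
      intro i h hiK
      rw [hng, heN i (by omega), if_neg hiK, if_neg (by omega), add_zero, add_zero, hgβ]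
    have hnL : (K : ℕ) ≠ m - 1 → n (β (m - 1)) = t := by
      intro hKL
      rw [hng, heN (m - 1) hm1m, if_neg (Ne.symm hKL), if_pos rfl, zero_add, hgβ]
      have h2 : m - 1 + 1 = m := by omega
      rw [h2, hmu]
    have hgt : g t = (∑ i ∈ Finset.Ico ((K : ℕ) + 1) m, β i) + β m := by
      rw [htdef, map_sum, Finset.sum_congr rfl (fun i _ => hgβ i),
        Finset.sum_Ico_add' β (K : ℕ) m 1, Finset.sum_Ico_succ_top (by omega : (K : ℕ) + 1 ≤ m)]
    have hsplit : t = β (K : ℕ) + ∑ i ∈ Finset.Ico ((K : ℕ) + 1) m, β i := by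
      rw [htdef, Finset.sum_eq_sum_Ico_succ_bot hKm]
    have hnt : n t = 0 := by
      rw [hng, hgt, het]
      have h3 : (∑ i ∈ Finset.Ico ((K : ℕ) + 1) m, β i) + β m + (β (K : ℕ) + u)
          = (β (K : ℕ) + ∑ i ∈ Finset.Ico ((K : ℕ) + 1) m, β i) + (β m + u) := by abel
      rw [h3, ← hsplit, hmu, char2_add_self]
    have hβKt : β (K : ℕ) = t + ∑ i ∈ Finset.Ico ((K : ℕ) + 1) m, β i := by
      rw [hsplit, add_assoc, char2_add_self, add_zero]
    -- chains
    have step : ∀ p q (x : V), (n ^ (p + q)) x = (n ^ p) ((n ^ q) x) := by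
      intro p q x
      rw [pow_add, Module.End.mul_apply]
    have hD1 : ∀ c i, i + c + 1 = m → (K : ℕ) < i → (n ^ (c + 2)) (β i) = 0 := by
      intro c
      induction c with
      | zero =>
        intro i hi hKi
        have him : i = m - 1 := by omega
        subst him
        show (n ^ (0 + 2)) (β (m - 1)) = 0
        rw [show (0 + 2 : ℕ) = 1 + 1 from rfl, step, pow_one, hnL (by omega), hnt]
      | succ c IH =>
        intro i hi hKi
        rw [show c + 1 + 2 = (c + 2) + 1 from rfl, pow_succ, Module.End.mul_apply,
          hn1 i (by omega) (by omega)]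
        exact IH (i + 1) (by omega) (by omega)
    have hD1' : ∀ i, (K : ℕ) < i → i < m → (n ^ (m + 1 - i)) (β i) = 0 := by
      intro i h1 h2
      have h3 : m + 1 - i = (m - 1 - i) + 2 := by omega
      rw [h3]
      exact hD1 (m - 1 - i) i (by omega) h1
    have hD2 : (n ^ (m - (K : ℕ))) (β (K : ℕ)) = 0 := by
      have h1 : (n ^ (m - (K : ℕ))) t = 0 := by
        have h2 : m - (K : ℕ) = (m - (K : ℕ) - 1) + 1 := by omega
        rw [h2, step, pow_one, hnt, map_zero]
      rw [hβKt, map_add, h1, zero_add, map_sum]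
      refine Finset.sum_eq_zero fun i hi => ?_
      rw [Finset.mem_Ico] at hi
      have h4 : m - (K : ℕ) = ((m - (K : ℕ)) - (m + 1 - i)) + (m + 1 - i) := by omega
      rw [h4, step, hD1' i (by omega) hi.2, map_zero]
    have hD3 : ∀ c i, i + c = (K : ℕ) → (n ^ c) (β i) = β (K : ℕ) := by
      intro c
      induction c with
      | zero =>
        intro i hi
        have h5 : i = (K : ℕ) := by omega
        rw [pow_zero, Module.End.one_apply, h5]
      | succ c IH =>
        intro i hi
        rw [pow_succ, Module.End.mul_apply, hn1 i (by omega) (by omega)]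
        exact IH (i + 1) (by omega)
    have hfin : ∀ i, i < m → (n ^ (m + 1)) (β i) = 0 := by
      intro i him
      rcases lt_trichotomy i (K : ℕ) with h | h | h
      · have e1 : m + 1 = (i + 1) + ((m - (K : ℕ)) + ((K : ℕ) - i)) := by omega
        rw [e1, step (i + 1) ((m - (K : ℕ)) + ((K : ℕ) - i)),
          step (m - (K : ℕ)) ((K : ℕ) - i), hD3 ((K : ℕ) - i) i (by omega), hD2,
          map_zero]
      · have e1 : m + 1 = ((K : ℕ) + 1) + (m - (K : ℕ)) := by omega
        rw [e1, step, h, hD2, map_zero]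
      · have e1 : m + 1 = i + (m + 1 - i) := by omega
        rw [e1, step, hD1' i h him, map_zero]
    refine ⟨e, hidem, ⟨m + 1, ?_⟩⟩
    refine B.ext fun j => ?_
    rw [hB]
    show (n ^ (m + 1)) (β (j : ℕ)) = (0 : Module.End (ZMod 2) V) (β (j : ℕ))
    rw [hfin (j : ℕ) j.isLt, LinearMap.zero_apply]

end Cyclic


section Main

universe u

private lemma trivial_nilclean (V : Type u) [AddCommGroup V] [Module (ZMod 2) V]
    (hs : Subsingleton V) (f : Module.End (ZMod 2) V) :
    ∃ e : Module.End (ZMod 2) V, IsIdempotentElem e ∧ IsNilpotent (f - e) := by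
  refine ⟨0, by simp [IsIdempotentElem], ⟨1, ?_⟩⟩
  rw [pow_one, sub_zero]
  ext x
  exact Subsingleton.elim _ _

lemma end_nilclean : ∀ (N : ℕ) (V : Type u) [AddCommGroup V] [Module (ZMod 2) V]
    [FiniteDimensional (ZMod 2) V], Module.finrank (ZMod 2) V ≤ N →
    ∀ f : Module.End (ZMod 2) V, ∃ e : Module.End (ZMod 2) V,
      IsIdempotentElem e ∧ IsNilpotent (f - e) := by
  intro N
  induction N with
  | zero =>
    intro V _ _ _ hr f
    exact trivial_nilclean V (Module.finrank_zero_iff.mp (Nat.le_zero.mp hr)) f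
  | succ N IH =>
    intro V _ _ _ hr f
    by_cases hV : Module.finrank (ZMod 2) V = 0
    · exact trivial_nilclean V (Module.finrank_zero_iff.mp hV) f
    have hnt : Nontrivial V := Module.finrank_pos_iff.mp (Nat.pos_of_ne_zero hV)
    obtain ⟨v, hv⟩ := exists_ne (0 : V)
    set W : Submodule (ZMod 2) V :=
      Submodule.span (ZMod 2) (Set.range fun k : ℕ => (f ^ k) v) with hWdef
    have hvW : v ∈ W := Submodule.subset_span ⟨0, by simp⟩
    have hfW : ∀ x ∈ W, f x ∈ W := by
      intro x hx
      induction hx using Submodule.span_induction with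
      | mem y hy =>
        obtain ⟨k, rfl⟩ := hy
        refine Submodule.subset_span ⟨k + 1, ?_⟩
        show (f ^ (k + 1)) v = f ((f ^ k) v)
        rw [pow_succ', Module.End.mul_apply]
      | zero => simp
      | add y z hy hz ihy ihz => rw [map_add]; exact Submodule.add_mem _ ihy ihz
      | smul c y hy ihy => rw [map_smul]; exact Submodule.smul_mem _ c ihy
    set gW : Module.End (ZMod 2) ↥W := f.restrict hfW with hgWdef
    set w : ↥W := ⟨v, hvW⟩ with hwdef
    have hwv : ∀ k : ℕ, (((gW ^ k) w : ↥W) : V) = (f ^ k) v := by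
      intro k
      induction k with
      | zero => simp [hwdef]
      | succ k ih =>
        rw [pow_succ', Module.End.mul_apply, pow_succ', Module.End.mul_apply,
          LinearMap.restrict_coe_apply, ih]
    set P : ℕ → Prop := fun k =>
      (gW ^ k) w ∈ Submodule.span (ZMod 2) ((fun i : ℕ => (gW ^ i) w) '' Set.Iio k) with hPdef
    have hrange : ∀ k : ℕ, Set.range (fun i : Fin k => (gW ^ (i : ℕ)) w)
        = (fun i : ℕ => (gW ^ i) w) '' Set.Iio k := by
      intro k
      ext x
      constructor
      · rintro ⟨i, rfl⟩; exact ⟨i, i.isLt, rfl⟩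
      · rintro ⟨i, hi, rfl⟩; exact ⟨⟨i, hi⟩, rfl⟩
    have hIND : ∀ k : ℕ, (∀ j, j < k → ¬ P j) →
        LinearIndependent (ZMod 2) (fun i : Fin k => (gW ^ (i : ℕ)) w) := by
      intro k
      induction k with
      | zero => intro _; exact linearIndependent_empty_type
      | succ k ih =>
        intro hk
        have hsnoc : (fun i : Fin (k + 1) => (gW ^ (i : ℕ)) w)
            = Fin.snoc (fun i : Fin k => (gW ^ (i : ℕ)) w) ((gW ^ k) w) := by
          funext i
          refine Fin.lastCases ?_ ?_ i
          · rw [Fin.snoc_last, Fin.val_last]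
          · intro j; rw [Fin.snoc_castSucc, Fin.coe_castSucc]
        rw [hsnoc, linearIndependent_fin_snoc]
        refine ⟨ih (fun j hj => hk j (by omega)), ?_⟩
        rw [hrange]
        exact hk k (by omega)
    have hPex : ∃ k, P k := by
      by_contra hno
      push_neg at hno
      have h1 := hIND (Module.finrank (ZMod 2) ↥W + 1) (fun j _ => hno j)
      have h2 := h1.fintype_card_le_finrank
      simp only [Fintype.card_fin] at h2
      omega
    classical
    set m : ℕ := Nat.find hPex with hmdef
    have hPm : P m := Nat.find_spec hPex
    have hmin : ∀ j, j < m → ¬ P j := fun j hj => Nat.find_min hPex hj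
    have hw0 : w ≠ 0 := by
      intro h
      exact hv (by simpa [hwdef] using congrArg (Subtype.val) h)
    have hm0 : 0 < m := by
      rcases Nat.eq_zero_or_pos m with h | h
      · exfalso
        have h2 : (gW ^ 0) w ∈ Submodule.span (ZMod 2)
            ((fun i : ℕ => (gW ^ i) w) '' Set.Iio 0) := h ▸ hPm
        have hempty : ((fun i : ℕ => (gW ^ i) w) '' Set.Iio 0) = ∅ := by
          ext y
          simp only [Set.mem_image, Set.mem_Iio, Set.mem_empty_iff_false, iff_false]
          rintro ⟨i, hi, -⟩
          omega
        rw [hempty, Submodule.span_empty, Submodule.mem_bot, pow_zero,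
          Module.End.one_apply] at h2
        exact hw0 h2
      · exact h
    have hind := hIND m hmin
    set T : Submodule (ZMod 2) ↥W :=
      Submodule.span (ZMod 2) ((fun i : ℕ => (gW ^ i) w) '' Set.Iio m) with hTdef
    have hTinv : ∀ x ∈ T, gW x ∈ T := by
      intro x hx
      induction hx using Submodule.span_induction with
      | mem y hy =>
        obtain ⟨j, hj, rfl⟩ := hy
        have hstep : gW ((gW ^ j) w) = (gW ^ (j + 1)) w := by
          rw [pow_succ', Module.End.mul_apply]
        by_cases hjm : j + 1 < m
        · rw [hstep]
          exact Submodule.subset_span ⟨j + 1, hjm, rfl⟩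
        · have hjm2 : j + 1 = m := by
            have : j < m := hj
            omega
          rw [hstep, hjm2]
          exact hPm
      | zero => simp
      | add y z hy hz ihy ihz => rw [map_add]; exact Submodule.add_mem _ ihy ihz
      | smul c y hy ihy => rw [map_smul]; exact Submodule.smul_mem _ c ihy
    have hall : ∀ k, (gW ^ k) w ∈ T := by
      intro k
      induction k with
      | zero => exact Submodule.subset_span ⟨0, hm0, rfl⟩
      | succ k ih =>
        rw [pow_succ', Module.End.mul_apply]
        exact hTinv _ ih
    have hspan : ⊤ ≤ Submodule.span (ZMod 2)
        (Set.range fun i : Fin m => (gW ^ (i : ℕ)) w) := by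
      rw [hrange m]
      intro x _
      have hWT : W ≤ T.map W.subtype := by
        refine le_trans (le_of_eq hWdef) (Submodule.span_le.mpr ?_)
        rintro y ⟨k, rfl⟩
        exact ⟨(gW ^ k) w, hall k, hwv k⟩
      obtain ⟨y, hyT, hyx⟩ := hWT x.2
      have hxy : y = x := Subtype.ext hyx
      rwa [hxy] at hyT
    obtain ⟨eW, heW, hnilW⟩ := cyclic_nilclean gW w m hm0 hind hspan
    obtain ⟨p, hp⟩ := hnilW
    -- quotient
    have hcomap : W ≤ W.comap f := fun x hx => hfW x hx
    set fQ : Module.End (ZMod 2) (V ⧸ W) := W.mapQ W f hcomap with hfQdef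
    have hWbot : W ≠ ⊥ := by
      intro h
      rw [h, Submodule.mem_bot] at hvW
      exact hv hvW
    have hrQ : Module.finrank (ZMod 2) (V ⧸ W) ≤ N := by
      have h1 := Submodule.finrank_quotient_add_finrank W
      have h2 : 0 < Module.finrank (ZMod 2) ↥W :=
        Nat.pos_of_ne_zero (fun h => hWbot (Submodule.finrank_eq_zero.mp h))
      omega
    obtain ⟨eQ, heQ, hnilQ⟩ := IH (V ⧸ W) hrQ fQ
    obtain ⟨q, hq⟩ := hnilQ
    -- gluing
    obtain ⟨U, hcompl⟩ := Submodule.exists_isCompl W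
    set π : V →ₗ[ZMod 2] ↥W := W.linearProjOfIsCompl U hcompl with hπdef
    set χ : (V ⧸ W) ≃ₗ[ZMod 2] ↥U := Submodule.quotientEquivOfIsCompl W U hcompl with hχdef
    set e : Module.End (ZMod 2) V :=
      W.subtype ∘ₗ eW ∘ₗ π
        + U.subtype ∘ₗ (χ : (V ⧸ W) →ₗ[ZMod 2] ↥U) ∘ₗ eQ ∘ₗ W.mkQ with hedef
    have heval : ∀ x : V, e x = ((eW (π x) : ↥W) : V) + ((χ (eQ (W.mkQ x)) : ↥U) : V) :=
      fun x => rfl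
    have hmkQχ : ∀ y : V ⧸ W, W.mkQ ((χ y : ↥U) : V) = y := by
      intro y
      rw [Submodule.mkQ_apply]
      exact Submodule.mk_quotientEquivOfIsCompl_apply hcompl y
    have hmkQW : ∀ z : ↥W, W.mkQ (z : V) = 0 :=
      fun z => (Submodule.Quotient.mk_eq_zero W).mpr z.2
    have hmkQe : ∀ x, W.mkQ (e x) = eQ (W.mkQ x) := by
      intro x
      rw [heval, map_add, hmkQW, hmkQχ, zero_add]
    have hπe : ∀ x, π (e x) = eW (π x) := by
      intro x
      rw [heval, map_add, show π ((eW (π x) : ↥W) : V) = eW (π x) from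
          Submodule.projectionOnto_apply_left hcompl (eW (π x)),
        show π ((χ (eQ (W.mkQ x)) : ↥U) : V) = 0 from
          Submodule.projectionOnto_apply_of_mem_right hcompl (χ (eQ (W.mkQ x))).2, add_zero]
    have hidem : IsIdempotentElem e := by
      refine LinearMap.ext fun x => ?_
      rw [Module.End.mul_apply, heval (e x), hπe, hmkQe,
        ← Module.End.mul_apply eW eW, heW, ← Module.End.mul_apply eQ eQ, heQ, heval]
    set n : Module.End (ZMod 2) V := f - e with hndef
    have hmkQf : ∀ x, W.mkQ (f x) = fQ (W.mkQ x) := by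
      intro x
      rw [Submodule.mkQ_apply, Submodule.mkQ_apply, hfQdef, Submodule.mapQ_apply]
    have hnmkQ : ∀ x, W.mkQ (n x) = (fQ - eQ) (W.mkQ x) := by
      intro x
      rw [hndef, LinearMap.sub_apply, map_sub, hmkQe, hmkQf, LinearMap.sub_apply]
    have hnpowQ : ∀ k x, W.mkQ ((n ^ k) x) = ((fQ - eQ) ^ k) (W.mkQ x) := by
      intro k
      induction k with
      | zero => intro x; simp
      | succ k ih =>
        intro x
        rw [pow_succ, Module.End.mul_apply, pow_succ, Module.End.mul_apply, ih (n x), hnmkQ]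
    have hnrestr : ∀ (x : V) (hx : x ∈ W), n x = (((gW - eW) ⟨x, hx⟩ : ↥W) : V) := by
      intro x hx
      have hπx : π x = ⟨x, hx⟩ := Submodule.linearProjOfIsCompl_apply_left hcompl ⟨x, hx⟩
      have hmk : W.mkQ x = 0 := (Submodule.Quotient.mk_eq_zero W).mpr hx
      rw [hndef, LinearMap.sub_apply, heval, hπx, hmk, map_zero, map_zero,
        Submodule.coe_zero, add_zero]
      rw [LinearMap.sub_apply, Submodule.coe_sub]
      congr 1
    have hnpowW : ∀ k (x : V) (hx : x ∈ W),
        (n ^ k) x = ((((gW - eW) ^ k) ⟨x, hx⟩ : ↥W) : V) := by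
      intro k
      induction k with
      | zero => intro x hx; simp
      | succ k ih =>
        intro x hx
        rw [pow_succ', Module.End.mul_apply, pow_succ', Module.End.mul_apply, ih x hx,
          hnrestr _ (((gW - eW) ^ k) ⟨x, hx⟩).2]
    refine ⟨e, hidem, ⟨p + q, ?_⟩⟩
    refine LinearMap.ext fun x => ?_
    rw [pow_add, Module.End.mul_apply]
    have hxW : (n ^ q) x ∈ W := by
      have h3 := hnpowQ q x
      rw [hq, LinearMap.zero_apply, Submodule.mkQ_apply] at h3
      exact (Submodule.Quotient.mk_eq_zero W).mp h3
    rw [hnpowW p _ hxW, hp, LinearMap.zero_apply, Submodule.coe_zero, LinearMap.zero_apply]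

end Main


theorem matrix_F2_nilClean (n : ℕ) (hn : 0 < n) :
    IsNilCleanRing (Matrix (Fin n) (Fin n) (ZMod 2)) := by
  intro A
  let φ : Matrix (Fin n) (Fin n) (ZMod 2) ≃ₐ[ZMod 2]
      ((Fin n → ZMod 2) →ₗ[ZMod 2] (Fin n → ZMod 2)) := Matrix.toLinAlgEquiv'
  obtain ⟨e, he, hnil⟩ := end_nilclean (Module.finrank (ZMod 2) (Fin n → ZMod 2))
    (Fin n → ZMod 2) le_rfl (φ A)
  refine ⟨φ.symm e, φ.symm (φ A - e), ?_, ?_, ?_⟩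
  · unfold IsIdempotentElem
    rw [← map_mul, he]
  · exact IsNilpotent.map hnil φ.symm
  · rw [← map_add, add_sub_cancel, AlgEquiv.symm_apply_apply]
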